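/- Let P be a field, X a class of commutative P-algebras given as a family A : κ → Type, n : ℕ, T ⊆ MvPolynomial (Fin n) P, and f ∈ MvPolynomial (Fin n) P. Then f belongs to the intersection of all X-closed ideals of MvPolynomial (Fin n) P containing T (the X-closure of T) if and only if the infinitary quasiidentity with premise set T and conclusion f holds in every algebra A k of the family. -/

import Mathlib

open MvPolynomial

universe u v w

/-- An ideal `I` of the free commutative `P`-algebra of rank `n` is `X`-closed
(for the class `X` given by the family `A`) if the quotient algebra embeds into
a product of members of the family. -/
def IsXClosed (P : Type u) [Field P] {κ : Type v} (A : κ → Type w)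
    [∀ k, CommRing (A k)] [∀ k, Algebra P (A k)]
    {n : ℕ} (I : Ideal (MvPolynomial (Fin n) P)) : Prop :=
  ∃ (J : Type (max u v w)) (k : J → κ)
    (g : (MvPolynomial (Fin n) P ⧸ I) →ₐ[P] ((j : J) → A (k j))),
    Function.Injective g

/-- `f` lies in the `X`-closure of `T` (the intersection of all
`X`-closed ideals containing `T`) iff the infinitary quasiidentity with premise
set `T` and conclusion `f` holds in every algebra `A k` of the class. -/
theorem mem_XClosure_iff_quasiidentity (P : Type u) [Field P] {κ : Type v}
    (A : κ → Type w) [∀ k, CommRing (A k)] [∀ k, Algebra P (A k)]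
    (n : ℕ) (T : Set (MvPolynomial (Fin n) P)) (f : MvPolynomial (Fin n) P) :
    (∀ I : Ideal (MvPolynomial (Fin n) P), IsXClosed P A I → T ⊆ ↑I → f ∈ I)
      ↔
    (∀ (k : κ) (μ : Fin n → A k),
        (∀ g ∈ T, aeval μ g = 0) → aeval μ f = 0) := by
  constructor
  · intro h k μ hT
    set I : Ideal (MvPolynomial (Fin n) P) :=
      RingHom.ker (aeval μ : MvPolynomial (Fin n) P →ₐ[P] A k) with hIdef
    have hX : IsXClosed P A I := by
      let h0 : (MvPolynomial (Fin n) P ⧸ I) →ₐ[P] A k :=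
        Ideal.Quotient.liftₐ I (aeval μ) (fun a ha => ha)
      have hinj : Function.Injective h0 := by
        rw [injective_iff_map_eq_zero]
        intro x hx
        obtain ⟨p, rfl⟩ := Ideal.Quotient.mk_surjective x
        have : aeval μ p = 0 := hx
        exact Ideal.Quotient.eq_zero_iff_mem.mpr this
      refine ⟨PUnit, fun _ => k, Pi.algHom P (fun _ : PUnit => A k) (fun _ => h0), ?_⟩
      intro a b hab
      exact hinj (congrFun hab PUnit.unit)
    exact h I hX (fun g hg => hT g hg)
  · intro h I hI hT
    obtain ⟨J, k, g, hg⟩ := hI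
    have : g (Ideal.Quotient.mk I f) = 0 := by
      funext j
      let φ : MvPolynomial (Fin n) P →ₐ[P] A (k j) :=
        (Pi.evalAlgHom P (fun j => A (k j)) j).comp
          (g.comp (Ideal.Quotient.mkₐ P I))
      have hφ : ∀ p : MvPolynomial (Fin n) P, aeval (fun i => φ (X i)) p = φ p := by
        intro p
        conv_rhs => rw [aeval_unique φ]
        rfl
      have hzero : aeval (fun i => φ (X i)) f = 0 := by
        apply h (k j)
        intro q hq
        rw [hφ q]
        simp only [φ, AlgHom.comp_apply, Ideal.Quotient.mkₐ_eq_mk]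
        rw [Ideal.Quotient.eq_zero_iff_mem.mpr (hT hq)]
        simp
      rw [hφ f] at hzero
      simpa [φ] using hzero
    rw [← map_zero g] at this
    have := hg this
    rwa [← Ideal.Quotient.eq_zero_iff_mem]
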